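/- L²-minimality of the equilibrated element solution: let k ≥ 1 and let G, H : ℝ³ → ℝ³ both be of Nédélec form R_k with curl G = curl H everywhere on ℝ³, and suppose ∫_{T̂} H · ∇ψ dx = 0 for every real polynomial ψ of total degree at most k. Then ∫_{T̂} |G|² dx = ∫_{T̂} |H|² dx + ∫_{T̂} |G − H|² dx; in particular ∫_{T̂} |H|² dx ≤ ∫_{T̂} |G|² dx. -/

import Mathlib

open MeasureTheory

/-- Partial derivative of a scalar function on ℝ³ in direction `i`. -/
noncomputable def pd3 (f : (Fin 3 → ℝ) → ℝ) (i : Fin 3) (x : Fin 3 → ℝ) : ℝ :=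
  fderiv ℝ f x (Pi.single i 1)

/-- The curl of a vector field on ℝ³. -/
noncomputable def curl3 (F : (Fin 3 → ℝ) → (Fin 3 → ℝ)) (x : Fin 3 → ℝ) : Fin 3 → ℝ :=
  ![pd3 (fun y => F y 2) 1 x - pd3 (fun y => F y 1) 2 x,
    pd3 (fun y => F y 0) 2 x - pd3 (fun y => F y 2) 0 x,
    pd3 (fun y => F y 1) 0 x - pd3 (fun y => F y 0) 1 x]

/-- The divergence of a vector field on ℝ³. -/
noncomputable def div3 (F : (Fin 3 → ℝ) → (Fin 3 → ℝ)) (x : Fin 3 → ℝ) : ℝ :=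
  ∑ i, pd3 (fun y => F y i) i x

/-- The gradient of a scalar function on ℝ³. -/
noncomputable def grad3 (f : (Fin 3 → ℝ) → ℝ) (x : Fin 3 → ℝ) : Fin 3 → ℝ :=
  fun i => fderiv ℝ f x (Pi.single i 1)

/-- Euclidean dot product on ℝ³. -/
def dot3 (a b : Fin 3 → ℝ) : ℝ := ∑ i, a i * b i

/-- Cross product on ℝ³. -/
def cross3 (a b : Fin 3 → ℝ) : Fin 3 → ℝ :=
  ![a 1 * b 2 - a 2 * b 1, a 2 * b 0 - a 0 * b 2, a 0 * b 1 - a 1 * b 0]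

/-- `f` is (the evaluation of) a real polynomial in three variables of total degree ≤ k. -/
def IsPolyFun3 (k : ℕ) (f : (Fin 3 → ℝ) → ℝ) : Prop :=
  ∃ p : MvPolynomial (Fin 3) ℝ, p.totalDegree ≤ k ∧ ∀ x, f x = MvPolynomial.eval x p

/-- `A` is of Nédélec form `R_k`: `A x = a x + x × b x` with the components of `a, b`
polynomials of total degree at most `k - 1`. -/
def IsNedelec (k : ℕ) (A : (Fin 3 → ℝ) → (Fin 3 → ℝ)) : Prop :=
  ∃ a b : (Fin 3 → ℝ) → (Fin 3 → ℝ),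
    (∀ i, IsPolyFun3 (k - 1) (fun x => a x i)) ∧
    (∀ i, IsPolyFun3 (k - 1) (fun x => b x i)) ∧
    ∀ x, A x = a x + cross3 x (b x)

/-- `u` is of Raviart–Thomas form `D_k`: `u x = v x + (w x) • x` with the components of `v`
and the scalar `w` polynomials of total degree at most `k - 1`. -/
def IsRT (k : ℕ) (u : (Fin 3 → ℝ) → (Fin 3 → ℝ)) : Prop :=
  ∃ (v : (Fin 3 → ℝ) → (Fin 3 → ℝ)) (w : (Fin 3 → ℝ) → ℝ),
    (∀ i, IsPolyFun3 (k - 1) (fun x => v x i)) ∧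
    IsPolyFun3 (k - 1) w ∧
    ∀ x, u x = v x + w x • x

/-- The standard reference tetrahedron in ℝ³. -/
def refTet : Set (Fin 3 → ℝ) := {x | (∀ i, 0 ≤ x i) ∧ ∑ i, x i ≤ 1}

section AuxPoincare
open MvPolynomial

noncomputable def evalD (p : MvPolynomial (Fin 3) ℝ) (x : Fin 3 → ℝ) : (Fin 3 → ℝ) →L[ℝ] ℝ :=
  ∑ j, eval x (pderiv j p) • ContinuousLinearMap.proj j

lemma hasFDerivAt_eval (p : MvPolynomial (Fin 3) ℝ) (x : Fin 3 → ℝ) :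
    HasFDerivAt (fun y => eval y p) (evalD p x) x := by
  induction p using MvPolynomial.induction_on with
  | C a =>
    simp only [eval_C]
    have : evalD (C a) x = 0 := by simp [evalD]
    rw [this]; exact hasFDerivAt_const _ _
  | add p q hp hq =>
    have : evalD (p + q) x = evalD p x + evalD q x := by
      simp [evalD, add_smul, Finset.sum_add_distrib]
    simp only [eval_add, this]
    exact hp.add hq
  | mul_X p n hp =>
    have hn : HasFDerivAt (fun y : Fin 3 → ℝ => y n)
        (ContinuousLinearMap.proj (R := ℝ) (φ := fun _ : Fin 3 => ℝ) n) x :=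
      (ContinuousLinearMap.proj (R := ℝ) (φ := fun _ : Fin 3 => ℝ) n).hasFDerivAt
    have hmul := hp.mul hn
    have hscal : ∀ j, eval x (pderiv j (p * X n))
        = x n * eval x (pderiv j p) + (if j = n then eval x p else 0) := by
      intro j
      rw [Derivation.leibniz]
      by_cases h : j = n
      · subst h; simp [pderiv_X_self]; ring
      · simp [pderiv_X, Pi.single_apply, if_neg h, Ne.symm h]
    have key : evalD (p * X n) x
        = (eval x) p • ContinuousLinearMap.proj (R := ℝ) (φ := fun _ : Fin 3 => ℝ) n
          + x n • evalD p x := by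
      unfold evalD
      rw [Finset.smul_sum]
      simp only [hscal, add_smul, Finset.sum_add_distrib, ite_smul, zero_smul,
        Finset.sum_ite_eq', Finset.mem_univ, if_pos, smul_smul]
      abel
    rw [show (fun y => eval y (p * X n)) = fun y => eval y p * y n by
      funext y; simp, key]
    exact hmul

/-- Euler operator. -/
noncomputable def Eop (p : MvPolynomial (Fin 3) ℝ) : MvPolynomial (Fin 3) ℝ :=
  ∑ i, X i * pderiv i p

lemma Eop_monomial (u : Fin 3 →₀ ℕ) (a : ℝ) :
    Eop (monomial u a) = monomial u ((∑ i, (u i : ℝ)) * a) := by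
  unfold Eop
  have hterm : ∀ i : Fin 3, X i * pderiv i (monomial u a) = monomial u ((u i : ℝ) * a) := by
    intro i
    rw [pderiv_monomial, X, monomial_mul]
    by_cases h : u i = 0
    · simp [h]
    · have hexp : Finsupp.single i 1 + (u - Finsupp.single i 1) = u := by
        ext j
        simp only [Finsupp.add_apply, Finsupp.tsub_apply, Finsupp.single_apply]
        by_cases hj : i = j
        · subst hj; simp; omega
        · simp [hj]
      rw [hexp]; ring_nf
  simp_rw [hterm]
  rw [← map_sum, ← Finset.sum_mul]

lemma Eop_add (p q : MvPolynomial (Fin 3) ℝ) : Eop (p + q) = Eop p + Eop q := by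
  simp [Eop, mul_add, Finset.sum_add_distrib]

lemma coeff_Eop (p : MvPolynomial (Fin 3) ℝ) (s : Fin 3 →₀ ℕ) :
    coeff s (Eop p) = (∑ i, (s i : ℝ)) * coeff s p := by
  induction p using MvPolynomial.induction_on' with
  | monomial u a =>
    rw [Eop_monomial, coeff_monomial, coeff_monomial]
    by_cases h : u = s
    · subst h; simp
    · simp [h]
  | add p q hp hq =>
    rw [Eop_add, coeff_add, hp, hq, coeff_add, mul_add]

lemma pderiv_Eop (i : Fin 3) (r : MvPolynomial (Fin 3) ℝ) :
    pderiv i (Eop r) = Eop (pderiv i r) + pderiv i r := by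
  induction r using MvPolynomial.induction_on' with
  | monomial u a =>
    rw [Eop_monomial, pderiv_monomial, pderiv_monomial, Eop_monomial]
    by_cases h : u i = 0
    · simp [h]
    · rw [← map_add]
      congr 1
      have hs : ∑ j, ((u - Finsupp.single i 1) : Fin 3 →₀ ℕ) j = (∑ j, u j) - 1 := by
        simp only [Finsupp.tsub_apply, Fin.sum_univ_three, Finsupp.single_apply]
        fin_cases i <;> simp_all <;> omega
      have hui : 1 ≤ u i := Nat.one_le_iff_ne_zero.2 h
      have h1le : 1 ≤ ∑ j, u j :=
        hui.trans (Finset.single_le_sum (f := fun j => u j)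
          (fun j _ => Nat.zero_le _) (Finset.mem_univ i))
      have : ∑ j, ((((u - Finsupp.single i 1) : Fin 3 →₀ ℕ) j : ℕ) : ℝ)
          = (∑ j, (u j : ℝ)) - 1 := by
        rw [← Nat.cast_sum, hs, Nat.cast_sub h1le]
        push_cast
        ring
      rw [this]; ring
  | add p q hp hq =>
    simp only [Eop_add, map_add, hp, hq]; abel

lemma exists_potential (p : Fin 3 → MvPolynomial (Fin 3) ℝ)
    (hcl : ∀ i j, pderiv i (p j) = pderiv j (p i)) :
    ∃ ψ : MvPolynomial (Fin 3) ℝ,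
      (∀ i, pderiv i ψ = p i) ∧ ψ.totalDegree ≤ (∑ j, X j * p j).totalDegree := by
  set q : MvPolynomial (Fin 3) ℝ := ∑ j, X j * p j with hqdef
  have hq0 : coeff 0 q = 0 := by
    simp only [hqdef, coeff_sum, ← constantCoeff_eq]
    simp
  set ψ : MvPolynomial (Fin 3) ℝ :=
    ∑ s ∈ q.support, monomial s (coeff s q / (∑ i, (s i : ℝ))) with hψdef
  have hψcoeff : ∀ s, coeff s ψ
      = if s ∈ q.support then coeff s q / (∑ i, (s i : ℝ)) else 0 := by
    intro s
    rw [hψdef, coeff_sum]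
    rw [Finset.sum_congr rfl (fun u _ => coeff_monomial s u _)]
    exact Finset.sum_ite_eq' _ _ _
  have hsumpos : ∀ s : Fin 3 →₀ ℕ, s ∈ q.support → (0:ℝ) < ∑ i, (s i : ℝ) := by
    intro s hs
    by_contra hle
    have hz : ∀ i, s i = 0 := by
      intro i
      by_contra hi
      have h1 : (1:ℝ) ≤ ∑ j, ((s j : ℕ) : ℝ) := by
        have : 1 ≤ ∑ j, s j :=
          (Nat.one_le_iff_ne_zero.2 hi).trans (Finset.single_le_sum
            (f := fun j => s j) (fun j _ => Nat.zero_le _) (Finset.mem_univ i))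
        calc (1:ℝ) = ((1:ℕ):ℝ) := by norm_num
        _ ≤ ((∑ j, s j : ℕ) : ℝ) := by exact_mod_cast this
        _ = ∑ j, ((s j : ℕ) : ℝ) := by push_cast; rfl
      linarith
    have : s = 0 := by ext i; exact hz i
    rw [this] at hs
    exact (mem_support_iff.mp hs) hq0
  have hEψ : Eop ψ = q := by
    ext s
    rw [coeff_Eop, hψcoeff]
    by_cases hs : s ∈ q.support
    · rw [if_pos hs, mul_div_cancel₀ _ (ne_of_gt (hsumpos s hs))]
    · rw [if_neg hs, mul_zero, (notMem_support_iff.mp hs).symm]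
  have hdi : ∀ i, pderiv i q = p i + Eop (p i) := by
    intro i
    rw [hqdef, map_sum]
    have hterm : ∀ j : Fin 3, pderiv i (X j * p j)
        = (if j = i then p i else 0) + X j * pderiv j (p i) := by
      intro j
      rw [Derivation.leibniz, pderiv_X, hcl i j]
      by_cases h : j = i
      · subst h; simp [Pi.single_apply, smul_eq_mul]; try ring
      · simp [Pi.single_apply, h, Ne.symm h, smul_eq_mul]; try ring
    simp_rw [hterm]
    rw [Finset.sum_add_distrib, Finset.sum_ite_eq' _ i, if_pos (Finset.mem_univ i)]
    rfl
  refine ⟨ψ, fun i => ?_, ?_⟩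
  · have h1 : pderiv i (Eop ψ) = Eop (pderiv i ψ) + pderiv i ψ := pderiv_Eop i ψ
    rw [hEψ, hdi i] at h1
    ext s
    have h2 := congrArg (coeff s) h1
    simp only [coeff_add, coeff_Eop] at h2
    have h3 : (∑ j, (s j : ℝ)) * coeff s (p i) + coeff s (p i)
        = (∑ j, (s j : ℝ)) * coeff s (pderiv i ψ) + coeff s (pderiv i ψ) := by
      linarith
    have hpos : (0:ℝ) < (∑ j, (s j : ℝ)) + 1 := by
      have : (0:ℝ) ≤ ∑ j, (s j : ℝ) := Finset.sum_nonneg fun j _ => Nat.cast_nonneg _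
      linarith
    nlinarith [h3]
  · rw [MvPolynomial.totalDegree, MvPolynomial.totalDegree]
    apply Finset.sup_mono
    intro s hs
    rw [mem_support_iff] at hs ⊢
    intro h0
    rw [hψcoeff, h0] at hs
    simp at hs

end AuxPoincare

section AuxGlue
open MvPolynomial

lemma fderiv_eval_single (p : MvPolynomial (Fin 3) ℝ) (x : Fin 3 → ℝ) (i : Fin 3) :
    fderiv ℝ (fun y => eval y p) x (Pi.single i 1) = eval x (pderiv i p) := by
  rw [(hasFDerivAt_eval p x).fderiv]
  simp only [evalD, ContinuousLinearMap.sum_apply, ContinuousLinearMap.smul_apply,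
    ContinuousLinearMap.proj_apply, Pi.single_apply, smul_eq_mul, mul_ite, mul_one, mul_zero]
  rw [Finset.sum_ite_eq' _ i, if_pos (Finset.mem_univ i)]

lemma continuous_eval3 (p : MvPolynomial (Fin 3) ℝ) :
    Continuous fun y : Fin 3 → ℝ => eval y p :=
  continuous_iff_continuousAt.2 fun x => (hasFDerivAt_eval p x).continuousAt

lemma pd3_eval (p : MvPolynomial (Fin 3) ℝ) (i : Fin 3) (x : Fin 3 → ℝ) :
    pd3 (fun y => eval y p) i x = eval x (pderiv i p) := by
  simp only [pd3]; exact fderiv_eval_single p x i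

/-- The polynomial vector field `x ↦ x × (eval of B)`. -/
noncomputable def cpoly (B : Fin 3 → MvPolynomial (Fin 3) ℝ) : Fin 3 → MvPolynomial (Fin 3) ℝ :=
  ![X 1 * B 2 - X 2 * B 1, X 2 * B 0 - X 0 * B 2, X 0 * B 1 - X 1 * B 0]

lemma eval_cpoly (B : Fin 3 → MvPolynomial (Fin 3) ℝ) (x : Fin 3 → ℝ) (j : Fin 3) :
    eval x (cpoly B j) = cross3 x (fun i => eval x (B i)) j := by
  fin_cases j <;> simp [cpoly, cross3]

lemma cpoly_deg {k : ℕ} (hk : 1 ≤ k) (B : Fin 3 → MvPolynomial (Fin 3) ℝ)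
    (hB : ∀ i, (B i).totalDegree ≤ k - 1) (j : Fin 3) :
    (cpoly B j).totalDegree ≤ k := by
  have key : ∀ a b : Fin 3, (X a * B b : MvPolynomial (Fin 3) ℝ).totalDegree ≤ k := by
    intro a b
    calc (X a * B b : MvPolynomial (Fin 3) ℝ).totalDegree
        ≤ (X a : MvPolynomial (Fin 3) ℝ).totalDegree + (B b).totalDegree :=
          totalDegree_mul _ _
      _ ≤ 1 + (k - 1) := by rw [totalDegree_X]; exact Nat.add_le_add_left (hB b) 1
      _ = k := by omega
  fin_cases j <;>
    · show ((X _ * B _ : MvPolynomial (Fin 3) ℝ) - X _ * B _).totalDegree ≤ k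
      exact (totalDegree_sub _ _).trans (sup_le (key _ _) (key _ _))

lemma nedelec_rep {k : ℕ} {A : (Fin 3 → ℝ) → (Fin 3 → ℝ)} (hA : IsNedelec k A) :
    ∃ PA PB : Fin 3 → MvPolynomial (Fin 3) ℝ,
      (∀ j, (PA j).totalDegree ≤ k - 1) ∧ (∀ j, (PB j).totalDegree ≤ k - 1) ∧
      (∀ x j, A x j = eval x (PA j + cpoly PB j)) := by
  obtain ⟨a, b, ha, hb, hAx⟩ := hA
  choose PA hPAdeg hPAev using ha
  choose PB hPBdeg hPBev using hb
  refine ⟨PA, PB, hPAdeg, hPBdeg, fun x j => ?_⟩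
  have hba : (fun i => eval x (PB i)) = b x := by
    funext i; exact (hPBev i x).symm
  rw [map_add, eval_cpoly, hba, hAx x]
  simp only [Pi.add_apply]
  rw [show a x j = eval x (PA j) from hPAev j x]

end AuxGlue

set_option maxHeartbeats 1000000 in
theorem equilibrated_solution_l2_minimal (k : ℕ) (hk : 1 ≤ k)
    (G H : (Fin 3 → ℝ) → (Fin 3 → ℝ)) (hG : IsNedelec k G) (hH : IsNedelec k H)
    (hcurl : ∀ x, curl3 G x = curl3 H x)
    (horth : ∀ ψ : MvPolynomial (Fin 3) ℝ, ψ.totalDegree ≤ k →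
      ∫ x in refTet, dot3 (H x) (grad3 (fun y => MvPolynomial.eval y ψ) x) = 0) :
    (∫ x in refTet, dot3 (G x) (G x)
      = (∫ x in refTet, dot3 (H x) (H x)) + ∫ x in refTet, dot3 (G x - H x) (G x - H x)) ∧
    ∫ x in refTet, dot3 (H x) (H x) ≤ ∫ x in refTet, dot3 (G x) (G x) := by
  classical
  obtain ⟨AG, BG, hAGdeg, hBGdeg, hGev⟩ := nedelec_rep hG
  obtain ⟨AH, BH, hAHdeg, hBHdeg, hHev⟩ := nedelec_rep hH
  set PG : Fin 3 → MvPolynomial (Fin 3) ℝ := fun j => AG j + cpoly BG j with hPGdef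
  set PH : Fin 3 → MvPolynomial (Fin 3) ℝ := fun j => AH j + cpoly BH j with hPHdef
  set p : Fin 3 → MvPolynomial (Fin 3) ℝ := fun j => PG j - PH j with hpdef
  have hpev : ∀ x j, MvPolynomial.eval x (p j) = G x j - H x j := by
    intro x j
    rw [hpdef]
    simp only [map_sub]
    rw [← hGev x j, ← hHev x j]
  -- derivatives of components
  have hpd : ∀ (i j : Fin 3) (x : Fin 3 → ℝ),
      MvPolynomial.eval x (MvPolynomial.pderiv i (p j))
        = pd3 (fun y => G y j) i x - pd3 (fun y => H y j) i x := by
    intro i j x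
    have hGj : (fun y => G y j) = fun y => MvPolynomial.eval y (PG j) :=
      funext fun y => hGev y j
    have hHj : (fun y => H y j) = fun y => MvPolynomial.eval y (PH j) :=
      funext fun y => hHev y j
    rw [hGj, hHj, pd3_eval, pd3_eval, hpdef]
    simp only [map_sub]
  -- closedness from equal curls
  have hclosed : ∀ i j, MvPolynomial.pderiv i (p j) = MvPolynomial.pderiv j (p i) := by
    have e12 : MvPolynomial.pderiv 1 (p 2) = MvPolynomial.pderiv 2 (p 1) := by
      apply MvPolynomial.funext
      intro x
      have h0 := congrFun (hcurl x) 0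
      simp only [curl3, Matrix.cons_val_zero] at h0
      rw [hpd, hpd]
      linarith
    have e20 : MvPolynomial.pderiv 2 (p 0) = MvPolynomial.pderiv 0 (p 2) := by
      apply MvPolynomial.funext
      intro x
      have h1 := congrFun (hcurl x) 1
      simp only [curl3, Matrix.cons_val_one, Matrix.head_cons, Matrix.cons_val_zero] at h1
      rw [hpd, hpd]
      linarith
    have e01 : MvPolynomial.pderiv 0 (p 1) = MvPolynomial.pderiv 1 (p 0) := by
      apply MvPolynomial.funext
      intro x
      have h2 := congrFun (hcurl x) 2
      simp only [curl3, Matrix.cons_val_two, Matrix.tail_cons, Matrix.head_cons] at h2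
      rw [hpd, hpd]
      linarith
    intro i j
    fin_cases i <;> fin_cases j <;>
      first
        | exact e12 | exact e12.symm | exact e20 | exact e20.symm
        | exact e01 | exact e01.symm | rfl
  -- the potential
  obtain ⟨ψ, hψd, hψdeg0⟩ := exists_potential p hclosed
  -- degree bound via cancellation of the cross part
  have hqq' : (∑ j, MvPolynomial.X j * p j)
      = ∑ j, MvPolynomial.X (R := ℝ) j * (AG j - AH j) := by
    apply MvPolynomial.funext
    intro x
    simp only [map_sum, map_mul, MvPolynomial.eval_X, map_sub, map_add, hpdef, hPGdef, hPHdef,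
      Fin.sum_univ_three, cpoly]
    simp only [map_sub, map_mul, MvPolynomial.eval_X, Matrix.cons_val_zero,
      Matrix.cons_val_one, Matrix.head_cons, Matrix.cons_val_two, Matrix.tail_cons]
    ring
  have hψdeg : ψ.totalDegree ≤ k := by
    refine hψdeg0.trans ?_
    rw [hqq']
    refine (MvPolynomial.totalDegree_finset_sum _ _).trans (Finset.sup_le fun j _ => ?_)
    calc (MvPolynomial.X (R := ℝ) j * (AG j - AH j)).totalDegree
        ≤ (MvPolynomial.X (R := ℝ) j).totalDegree + (AG j - AH j).totalDegree :=
          MvPolynomial.totalDegree_mul _ _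
      _ ≤ 1 + (k - 1) := by
          rw [MvPolynomial.totalDegree_X]
          exact Nat.add_le_add_left ((MvPolynomial.totalDegree_sub _ _).trans
            (sup_le (hAGdeg j) (hAHdeg j))) 1
      _ = k := by omega
  -- gradient identity
  have hgrad : ∀ x, grad3 (fun y => MvPolynomial.eval y ψ) x = G x - H x := by
    intro x
    funext i
    show fderiv ℝ (fun y => MvPolynomial.eval y ψ) x (Pi.single i 1) = (G x - H x) i
    rw [fderiv_eval_single, hψd i, hpev x i, Pi.sub_apply]
  -- orthogonality
  have horth0 : ∫ x in refTet, dot3 (H x) (G x - H x) = 0 := by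
    have h0 := horth ψ hψdeg
    simp only [hgrad] at h0
    exact h0
  -- compactness / measurability
  have hclosedSet : IsClosed refTet := by
    have : refTet = (⋂ i, {x : Fin 3 → ℝ | 0 ≤ x i}) ∩ {x : Fin 3 → ℝ | ∑ i, x i ≤ 1} := by
      ext x
      simp [refTet, Set.mem_iInter]
    rw [this]
    exact (isClosed_iInter fun i =>
        isClosed_le continuous_const (continuous_apply i)).inter
      (isClosed_le (continuous_finset_sum _ fun i _ => continuous_apply i) continuous_const)
  have hcompact : IsCompact refTet := by
    refine IsCompact.of_isClosed_subset (isCompact_Icc (a := (0 : Fin 3 → ℝ)) (b := 1))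
      hclosedSet ?_
    intro x hx
    obtain ⟨hx1, hx2⟩ := hx
    constructor
    · intro i; exact hx1 i
    · intro i
      have : x i ≤ ∑ j, x j :=
        Finset.single_le_sum (f := fun j => x j) (fun j _ => hx1 j) (Finset.mem_univ i)
      calc x i ≤ ∑ j, x j := this
        _ ≤ 1 := hx2
  have hmeas : MeasurableSet refTet := hclosedSet.measurableSet
  -- continuity of all components
  have hGc : ∀ j, Continuous fun y => G y j := by
    intro j
    have : (fun y => G y j) = fun y => MvPolynomial.eval y (PG j) := funext fun y => hGev y j
    rw [this]; exact continuous_eval3 _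
  have hHc : ∀ j, Continuous fun y => H y j := by
    intro j
    have : (fun y => H y j) = fun y => MvPolynomial.eval y (PH j) := funext fun y => hHev y j
    rw [this]; exact continuous_eval3 _
  -- integrability
  have hint : ∀ F1 F2 : (Fin 3 → ℝ) → (Fin 3 → ℝ), (∀ j, Continuous fun y => F1 y j) →
      (∀ j, Continuous fun y => F2 y j) →
      IntegrableOn (fun x => dot3 (F1 x) (F2 x)) refTet := by
    intro F1 F2 h1 h2
    have hc : Continuous fun x => dot3 (F1 x) (F2 x) := by
      simp only [dot3]
      exact continuous_finset_sum _ fun i _ => (h1 i).mul (h2 i)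
    exact hc.continuousOn.integrableOn_compact hcompact
  have hGHc : ∀ j, Continuous fun y => (G y - H y) j := by
    intro j
    simp only [Pi.sub_apply]
    exact (hGc j).sub (hHc j)
  have hiHH : IntegrableOn (fun x => dot3 (H x) (H x)) refTet := hint H H hHc hHc
  have hiDD : IntegrableOn (fun x => dot3 (G x - H x) (G x - H x)) refTet :=
    hint (fun x => G x - H x) (fun x => G x - H x) hGHc hGHc
  have hiHD : IntegrableOn (fun x => dot3 (H x) (G x - H x)) refTet :=
    hint H (fun x => G x - H x) hHc hGHc
  have hiHD2 : IntegrableOn (fun x => 2 * dot3 (H x) (G x - H x)) refTet := hiHD.const_mul 2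
  -- pointwise expansion
  have hpt : ∀ x, dot3 (G x) (G x)
      = dot3 (H x) (H x) + 2 * dot3 (H x) (G x - H x) + dot3 (G x - H x) (G x - H x) := by
    intro x
    simp only [dot3, Fin.sum_univ_three, Pi.sub_apply]
    ring
  have key : ∫ x in refTet, dot3 (G x) (G x)
      = (∫ x in refTet, dot3 (H x) (H x)) + ∫ x in refTet, dot3 (G x - H x) (G x - H x) := by
    calc ∫ x in refTet, dot3 (G x) (G x)
        = ∫ x in refTet, (dot3 (H x) (H x) + 2 * dot3 (H x) (G x - H x)
            + dot3 (G x - H x) (G x - H x)) := by simp only [hpt]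
      _ = (∫ x in refTet, (dot3 (H x) (H x) + 2 * dot3 (H x) (G x - H x)))
            + ∫ x in refTet, dot3 (G x - H x) (G x - H x) :=
          integral_add (hiHH.add hiHD2) hiDD
      _ = (∫ x in refTet, dot3 (H x) (H x)) + (∫ x in refTet, 2 * dot3 (H x) (G x - H x))
            + ∫ x in refTet, dot3 (G x - H x) (G x - H x) := by
          rw [integral_add hiHH hiHD2]
      _ = (∫ x in refTet, dot3 (H x) (H x)) + ∫ x in refTet, dot3 (G x - H x) (G x - H x) := by
          rw [integral_const_mul, horth0]
          ring
  refine ⟨key, ?_⟩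
  have hnn : 0 ≤ ∫ x in refTet, dot3 (G x - H x) (G x - H x) := by
    refine setIntegral_nonneg hmeas fun x _ => ?_
    exact Finset.sum_nonneg fun i _ => mul_self_nonneg _
  linarith [key]
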